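/- arXiv:2005.00703 — 2 statements merged into one kernel-verified Lean document; each statement's English description precedes it below -/
import Mathlib

section
/- Suppose F and G are differentiable functions on ℝ^d such that F is m-strongly convex, G − F is linear with gradient vector u, and f₁, f₂ are the (unique) minimizers of F and G respectively. Then ‖f₁ − f₂‖ ≤ ‖u‖/m. -/
open RealInnerProductSpace

lemma strong_growth {E : Type*} [NormedAddCommGroup E] [InnerProductSpace ℝ E]
    {m : ℝ} (hm : 0 < m) {φ : E → ℝ}
    (hφ : StrongConvexOn Set.univ m φ) {x : E} (hx : ∀ y, φ x ≤ φ y) (y : E) :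
    φ x + m / 2 * ‖y - x‖ ^ 2 ≤ φ y := by
  have h : ∀ t : ℝ, 0 < t → t < 1 → φ x + (1 - t) * (m / 2 * ‖y - x‖ ^ 2) ≤ φ y := by
    intro t ht ht1
    have h2 := hφ.2 (Set.mem_univ y) (Set.mem_univ x) (le_of_lt ht)
      (by linarith : (0:ℝ) ≤ 1 - t) (by ring)
    have hmin : φ x ≤ φ (t • y + (1 - t) • x) := hx _
    have h3 : φ x ≤ t * φ y + (1 - t) * φ x - t * (1 - t) * (m / 2 * ‖y - x‖ ^ 2) := by
      calc φ x ≤ φ (t • y + (1 - t) • x) := hmin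
        _ ≤ t * φ y + (1 - t) * φ x - t * (1 - t) * (m / 2 * ‖y - x‖ ^ 2) := by
            have := h2
            simpa [smul_eq_mul, mul_comm, mul_assoc, mul_left_comm] using this
    nlinarith [h3]
  have hlim : Filter.Tendsto (fun t : ℝ => φ x + (1 - t) * (m / 2 * ‖y - x‖ ^ 2))
      (nhdsWithin 0 (Set.Ioo 0 1)) (nhds (φ x + (1 - 0) * (m / 2 * ‖y - x‖ ^ 2))) := by
    apply Filter.Tendsto.mono_left _ nhdsWithin_le_nhds
    exact Filter.Tendsto.const_add _ (Filter.Tendsto.mul_const _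
      ((tendsto_const_nhds.sub Filter.tendsto_id)))
  have hne : (nhdsWithin (0:ℝ) (Set.Ioo 0 1)).NeBot :=
    left_nhdsWithin_Ioo_neBot one_pos
  have := le_of_tendsto hlim (Filter.eventually_of_mem self_mem_nhdsWithin
    (fun t ht => h t ht.1 ht.2))
  simpa using this

theorem strongly_convex_sensitivity (d : ℕ) (m : ℝ) (hm : 0 < m)
    (F G : EuclideanSpace ℝ (Fin d) → ℝ)
    (hFdiff : Differentiable ℝ F) (hGdiff : Differentiable ℝ G)
    (hF : ConvexOn ℝ Set.univ (fun f => F f - (m / 2) * ‖f‖ ^ 2))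
    (u : EuclideanSpace ℝ (Fin d))
    (hG : ∀ f, G f = F f + ⟪u, f⟫)
    (f₁ f₂ : EuclideanSpace ℝ (Fin d))
    (hf₁ : ∀ f, F f₁ ≤ F f) (hf₂ : ∀ f, G f₂ ≤ G f) :
    ‖f₁ - f₂‖ ≤ ‖u‖ / m := by
  -- F is strongly convex
  have hFsc : StrongConvexOn Set.univ m F := strongConvexOn_iff_convex.mpr hF
  -- the linear part is convex
  have hlin : ConvexOn ℝ (Set.univ : Set (EuclideanSpace ℝ (Fin d))) (fun f => ⟪u, f⟫) := by
    refine ⟨convex_univ, fun x _ y _ a b ha hb hab => ?_⟩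
    simp only [inner_add_right, real_inner_smul_right, smul_eq_mul]
    exact le_rfl
  -- G is strongly convex
  have hGsc : StrongConvexOn Set.univ m G := by
    rw [strongConvexOn_iff_convex]
    have : (fun f => G f - m / 2 * ‖f‖ ^ 2)
        = fun f => (F f - m / 2 * ‖f‖ ^ 2) + ⟪u, f⟫ := by
      funext f; rw [hG f]; ring
    rw [this]
    exact hF.add hlin
  have h1 : F f₁ + m / 2 * ‖f₂ - f₁‖ ^ 2 ≤ F f₂ := strong_growth hm hFsc hf₁ f₂
  have h2 : G f₂ + m / 2 * ‖f₁ - f₂‖ ^ 2 ≤ G f₁ := strong_growth hm hGsc hf₂ f₁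
  rw [hG f₂, hG f₁] at h2
  have hnorm : ‖f₂ - f₁‖ = ‖f₁ - f₂‖ := norm_sub_rev _ _
  rw [hnorm] at h1
  have hkey : m * ‖f₁ - f₂‖ ^ 2 ≤ ⟪u, f₁ - f₂⟫ := by
    rw [inner_sub_right]
    nlinarith [h1, h2]
  have hcs : ⟪u, f₁ - f₂⟫ ≤ ‖u‖ * ‖f₁ - f₂‖ := real_inner_le_norm u (f₁ - f₂)
  rcases eq_or_lt_of_le (norm_nonneg (f₁ - f₂)) with h0 | h0
  · rw [← h0]; positivity
  · rw [le_div_iff₀ hm]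
    nlinarith [hkey, hcs, h0]
end

section
/- Sensitivity of regularized ERM: let D and D' be datasets of size n differing in exactly one data point, each point satisfying ‖x_i‖ ≤ 1 and |y_i| = 1, and let L be convex and differentiable with |L'| ≤ 1. Let f and f' be the minimizers of Z(·|D) and Z(·|D') where Z(g|D) = (C₁/n)∑ L(y_i⟪g,x_i⟫) + (ρ/2)‖g‖². Then ‖f − f'‖ ≤ 2C₁/(n·ρ). -/
open RealInnerProductSpace

lemma norm_combo {E : Type*} [NormedAddCommGroup E] [InnerProductSpace ℝ E]
    (a b : E) (t : ℝ) :
    ‖a + t • (b - a)‖ ^ 2 = (1 - t) * ‖a‖ ^ 2 + t * ‖b‖ ^ 2 - t * (1 - t) * ‖a - b‖ ^ 2 := by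
  have h : ∀ v : E, ‖v‖ ^ 2 = ⟪v, v⟫ := fun v => (real_inner_self_eq_norm_sq v).symm
  rw [h, h, h, h]
  simp only [inner_add_left, inner_add_right, inner_sub_left, inner_sub_right,
    real_inner_smul_left, real_inner_smul_right]
  rw [real_inner_comm b a]
  ring

lemma erm_aux {E : Type*} [NormedAddCommGroup E] [InnerProductSpace ℝ E]
    {n : ℕ} (C₁ ρ : ℝ) (hC₁ : 0 ≤ C₁) (hρ : 0 < ρ)
    (L : ℝ → ℝ) (hLconv : ConvexOn ℝ Set.univ L)
    (x : Fin n → E) (y : Fin n → ℝ) (f g : E)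
    (hf : ∀ h, (C₁ / n) * ∑ i, L (y i * ⟪f, x i⟫) + (ρ / 2) * ‖f‖ ^ 2 ≤
      (C₁ / n) * ∑ i, L (y i * ⟪h, x i⟫) + (ρ / 2) * ‖h‖ ^ 2) :
    (C₁ / n) * ∑ i, L (y i * ⟪f, x i⟫) + (ρ / 2) * ‖f‖ ^ 2 + (ρ / 2) * ‖f - g‖ ^ 2 ≤
      (C₁ / n) * ∑ i, L (y i * ⟪g, x i⟫) + (ρ / 2) * ‖g‖ ^ 2 := by
  set A := ∑ i, L (y i * ⟪f, x i⟫) with hA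
  set B := ∑ i, L (y i * ⟪g, x i⟫) with hB
  set Q := ‖f - g‖ ^ 2 with hQ
  have hQ0 : 0 ≤ Q := sq_nonneg _
  have hc : (0:ℝ) ≤ C₁ / n := div_nonneg hC₁ (Nat.cast_nonneg n)
  have key : ∀ t : ℝ, 0 < t → t ≤ 1 →
      (ρ / 2) * (1 - t) * Q ≤ ((C₁ / n) * B + (ρ / 2) * ‖g‖ ^ 2) -
        ((C₁ / n) * A + (ρ / 2) * ‖f‖ ^ 2) := by
    intro t ht0 ht1
    set h := f + t • (g - f) with hh
    have h1 := hf h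
    have h2 : ∑ i, L (y i * ⟪h, x i⟫) ≤ (1 - t) * A + t * B := by
      rw [hA, hB, Finset.mul_sum, Finset.mul_sum, ← Finset.sum_add_distrib]
      apply Finset.sum_le_sum
      intro i _
      have harg : y i * ⟪h, x i⟫ = (1 - t) * (y i * ⟪f, x i⟫) + t * (y i * ⟪g, x i⟫) := by
        rw [hh]
        simp only [inner_add_left, inner_sub_left, real_inner_smul_left]
        ring
      rw [harg]
      have := hLconv.2 (Set.mem_univ (y i * ⟪f, x i⟫)) (Set.mem_univ (y i * ⟪g, x i⟫))
        (by linarith : (0:ℝ) ≤ 1 - t) (le_of_lt ht0) (by ring)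
      simpa [smul_eq_mul] using this
    have h3 : ‖h‖ ^ 2 = (1 - t) * ‖f‖ ^ 2 + t * ‖g‖ ^ 2 - t * (1 - t) * Q := by
      rw [hh, hQ]; exact norm_combo f g t
    have h4 : (C₁ / n) * ∑ i, L (y i * ⟪h, x i⟫) ≤ (C₁ / n) * ((1 - t) * A + t * B) :=
      mul_le_mul_of_nonneg_left h2 hc
    rw [h3] at h1
    have h5 : t * ((ρ / 2) * (1 - t) * Q) ≤
        t * (((C₁ / n) * B + (ρ / 2) * ‖g‖ ^ 2) - ((C₁ / n) * A + (ρ / 2) * ‖f‖ ^ 2)) := by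
      nlinarith [h1, h4]
    exact le_of_mul_le_mul_left h5 ht0
  have main : (ρ / 2) * Q ≤ ((C₁ / n) * B + (ρ / 2) * ‖g‖ ^ 2) -
      ((C₁ / n) * A + (ρ / 2) * ‖f‖ ^ 2) := by
    apply le_of_forall_pos_le_add
    intro ε hε
    set t := min 1 (ε / ((ρ / 2) * Q + 1)) with hts
    have hden : (0:ℝ) < (ρ / 2) * Q + 1 := by positivity
    have ht0 : 0 < t := lt_min one_pos (div_pos hε hden)
    have ht1 : t ≤ 1 := min_le_left _ _
    have hk := key t ht0 ht1
    have htb : t * ((ρ / 2) * Q) ≤ ε := by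
      have h6 : t ≤ ε / ((ρ / 2) * Q + 1) := min_le_right _ _
      have h7 : t * ((ρ / 2) * Q) ≤ (ε / ((ρ / 2) * Q + 1)) * ((ρ / 2) * Q + 1) := by
        apply mul_le_mul h6 (by linarith) (by positivity) (by positivity)
      rwa [div_mul_cancel₀ ε (ne_of_gt hden)] at h7
    nlinarith [hk, htb]
  linarith [main]

theorem erm_sensitivity (d n : ℕ) (hn : 0 < n) (C₁ ρ : ℝ) (hC₁ : 0 < C₁) (hρ : 0 < ρ)
    (L : ℝ → ℝ) (hLconv : ConvexOn ℝ Set.univ L) (hLdiff : Differentiable ℝ L)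
    (hL' : ∀ z, |deriv L z| ≤ 1)
    (x x' : Fin n → EuclideanSpace ℝ (Fin d)) (y y' : Fin n → ℝ)
    (hx : ∀ i, ‖x i‖ ≤ 1) (hx' : ∀ i, ‖x' i‖ ≤ 1)
    (hy : ∀ i, |y i| = 1) (hy' : ∀ i, |y' i| = 1)
    (s : Fin n) (hdiff : ∀ i, i ≠ s → x i = x' i ∧ y i = y' i)
    (f f' : EuclideanSpace ℝ (Fin d))
    (hf : ∀ g, (C₁ / n) * ∑ i, L (y i * ⟪f, x i⟫) + (ρ / 2) * ‖f‖ ^ 2 ≤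
      (C₁ / n) * ∑ i, L (y i * ⟪g, x i⟫) + (ρ / 2) * ‖g‖ ^ 2)
    (hf' : ∀ g, (C₁ / n) * ∑ i, L (y' i * ⟪f', x' i⟫) + (ρ / 2) * ‖f'‖ ^ 2 ≤
      (C₁ / n) * ∑ i, L (y' i * ⟪g, x' i⟫) + (ρ / 2) * ‖g‖ ^ 2) :
    ‖f - f'‖ ≤ 2 * C₁ / (n * ρ) := by
  have hnR : (0:ℝ) < n := Nat.cast_pos.mpr hn
  have hLip : ∀ a b : ℝ, L a - L b ≤ |a - b| := by
    have hL : LipschitzWith 1 L := lipschitzWith_of_nnnorm_deriv_le hLdiff (fun z => by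
      simpa [← NNReal.coe_le_coe, Real.norm_eq_abs] using hL' z)
    intro a b
    have := hL.dist_le_mul a b
    rw [Real.dist_eq, Real.dist_eq] at this
    calc L a - L b ≤ |L a - L b| := le_abs_self _
      _ ≤ 1 * |a - b| := this
      _ = |a - b| := one_mul _
  have G1 := erm_aux C₁ ρ hC₁.le hρ L hLconv x y f f' hf
  have G2 := erm_aux C₁ ρ hC₁.le hρ L hLconv x' y' f' f hf'
  rw [norm_sub_rev f' f] at G2
  -- difference of sums collapses to index s
  have hsplit : ∀ g : EuclideanSpace ℝ (Fin d),
      (∑ i, L (y i * ⟪g, x i⟫)) - (∑ i, L (y' i * ⟪g, x' i⟫)) =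
        L (y s * ⟪g, x s⟫) - L (y' s * ⟪g, x' s⟫) := by
    intro g
    rw [← Finset.sum_sub_distrib]
    apply Finset.sum_eq_single_of_mem s (Finset.mem_univ s)
    intro i _ his
    rw [(hdiff i his).1, (hdiff i his).2, sub_self]
  set u := f - f' with hu
  have hcs1 : L (y s * ⟪f', x s⟫) - L (y s * ⟪f, x s⟫) ≤ ‖u‖ := by
    calc L (y s * ⟪f', x s⟫) - L (y s * ⟪f, x s⟫) ≤ |y s * ⟪f', x s⟫ - y s * ⟪f, x s⟫| :=
          hLip _ _
      _ = |y s| * |⟪f' - f, x s⟫| := by rw [← abs_mul, inner_sub_left]; ring_nf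
      _ ≤ 1 * (‖f' - f‖ * ‖x s‖) := by
          rw [hy s]
          exact mul_le_mul_of_nonneg_left (abs_real_inner_le_norm _ _) one_pos.le
      _ ≤ 1 * (‖f' - f‖ * 1) := by
          apply mul_le_mul_of_nonneg_left _ one_pos.le
          exact mul_le_mul_of_nonneg_left (hx s) (norm_nonneg _)
      _ = ‖u‖ := by rw [hu, norm_sub_rev]; ring
  have hcs2 : L (y' s * ⟪f, x' s⟫) - L (y' s * ⟪f', x' s⟫) ≤ ‖u‖ := by
    calc L (y' s * ⟪f, x' s⟫) - L (y' s * ⟪f', x' s⟫) ≤ |y' s * ⟪f, x' s⟫ - y' s * ⟪f', x' s⟫| :=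
          hLip _ _
      _ = |y' s| * |⟪f - f', x' s⟫| := by rw [← abs_mul, inner_sub_left]; ring_nf
      _ ≤ 1 * (‖f - f'‖ * ‖x' s‖) := by
          rw [hy' s]
          exact mul_le_mul_of_nonneg_left (abs_real_inner_le_norm _ _) one_pos.le
      _ ≤ 1 * (‖f - f'‖ * 1) := by
          apply mul_le_mul_of_nonneg_left _ one_pos.le
          exact mul_le_mul_of_nonneg_left (hx' s) (norm_nonneg _)
      _ = ‖u‖ := by rw [hu]; ring
  have hc : (0:ℝ) < C₁ / n := div_pos hC₁ hnR
  -- sum G1 + G2, regularizers cancel: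
  have hsum : ρ * ‖u‖ ^ 2 ≤ (C₁ / n) *
      ((L (y s * ⟪f', x s⟫) - L (y' s * ⟪f', x' s⟫)) -
       (L (y s * ⟪f, x s⟫) - L (y' s * ⟪f, x' s⟫))) := by
    have e1 := hsplit f'
    have e2 := hsplit f
    nlinarith [G1, G2]
  have hkey : ρ * ‖u‖ ^ 2 ≤ (C₁ / n) * (2 * ‖u‖) := by
    apply hsum.trans
    apply mul_le_mul_of_nonneg_left _ hc.le
    nlinarith [hcs1, hcs2]
  rcases eq_or_lt_of_le (norm_nonneg u) with h0 | h0
  · rw [← h0]; positivity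
  · have hkey2 : ρ * ‖u‖ ^ 2 * n ≤ 2 * C₁ * ‖u‖ := by
      have h := mul_le_mul_of_nonneg_right hkey hnR.le
      calc ρ * ‖u‖ ^ 2 * n ≤ C₁ / n * (2 * ‖u‖) * n := h
        _ = 2 * C₁ * ‖u‖ := by field_simp
    rw [le_div_iff₀ (by positivity : (0:ℝ) < (n:ℝ) * ρ)]
    have h8 : (‖u‖ * ((n:ℝ) * ρ)) * ‖u‖ ≤ 2 * C₁ * ‖u‖ := by nlinarith [hkey2]
    exact le_of_mul_le_mul_right h8 h0
end
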